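/- Characterization theorem: Let R be a commutative ring with 1 and ⪯ a binary relation on R. Then (R, ⪯) is a quasi-ordered ring if and only if (R, ⪯) is either an ordered ring, or there exists a valuation v on R such that x ⪯ y ⇔ v(y) ≤ v(x). Moreover, the support of the quasi-order coincides with the support of the order, respectively of the valuation. -/

import Mathlib

/-- A valuation on a commutative ring `R`, bundled with its value group. -/
structure RingValuation (R : Type) [CommRing R] where
  Γ : Type
  [grp : AddCommGroup Γ]
  [ord : LinearOrder Γ]
  [isOrd : IsOrderedAddMonoid Γ]
  v : R → WithTop Γ
  map_zero : v 0 = ⊤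
  map_one : v 1 = 0
  map_mul : ∀ x y : R, v (x * y) = v x + v y
  map_add : ∀ x y : R, min (v x) (v y) ≤ v (x + y)

attribute [instance] RingValuation.grp RingValuation.ord RingValuation.isOrd

structure QOAux (R : Type) [CommRing R] : Type where
  le : R → R → Prop
  refl : ∀ x : R, le x x
  trans : ∀ x y z : R, le x y → le y z → le x z
  total : ∀ x y : R, le x y ∨ le y x
  zle1 : le 0 1
  nle10 : ¬ le 1 0
  qr2 : ∀ x y : R, le (x * y) 0 → le x 0 ∨ le y 0
  qr3 : ∀ x y z : R, le x y → le 0 z → le (x * z) (y * z)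
  qr4 : ∀ x y z : R, le x y → ¬ (le z y ∧ le y z) → le (x + z) (y + z)
  qr5 : ∀ x y z : R, le 0 z → ¬ le z 0 → le (x * z) (y * z) → le x y

namespace QOAux

variable {R : Type} [CommRing R] (D : QOAux R)

theorem le_congr {a b a' b' : R} (h : D.le a b) (e1 : a = a') (e2 : b = b') :
    D.le a' b' := e1 ▸ e2 ▸ h

theorem neg_nonneg' {a : R} (ha : D.le a 0) : D.le 0 (-a) := by
  by_cases hc : D.le (-a) 0 ∧ D.le 0 (-a)
  · exact hc.2
  · have := D.qr4 a 0 (-a) ha hc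
    simpa using this

theorem le_of_not_le' {a b : R} (hn : ¬ D.le a b) : D.le b a :=
  (D.total a b).resolve_left hn

/-- D5a : x ⪯ 0 → 0 ⪯ -x -/
theorem neg_nonneg {a : R} (ha : D.le a 0) : D.le 0 (-a) := by
  by_cases hc : D.le (-a) 0 ∧ D.le 0 (-a)
  · exact hc.2
  · have := D.qr4 a 0 (-a) ha hc
    simpa using this


/-- A0 : a ∼ -a → a ∼ 0 (case A) -/
theorem caseA_sim_zero_of_sim_neg (hA : ¬ D.le 0 (-1)) {a : R} (h1 : D.le a (-a)) (h2 : D.le (-a) a) :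
    D.le a 0 ∧ D.le 0 a := by
  -- key step: if 0 ⪯ a and a ∼ -a and ¬ a ⪯ 0  then 0 ⪯ -1, contradiction
  have key : ∀ b : R, D.le 0 b → D.le b (-b) → D.le b 0 := by
    intro b hb hbn
    by_contra hb0
    apply hA
    have h0b : D.le (0 * b) ((-1) * b) := by
      have : D.le 0 (-b) := D.trans _ _ _ hb hbn
      simpa using this
    exact D.qr5 0 (-1) b hb hb0 h0b
  rcases D.total 0 a with hc | hc
  · exact ⟨key a hc h1, hc⟩
  · have h0na : D.le 0 (-a) := D.neg_nonneg hc
    have hna : D.le (-a) 0 := by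
      have := key (-a) h0na (by simpa using h2)
      exact this
    have : D.le 0 (- -a) := D.neg_nonneg hna
    exact ⟨hc, by simpa using this⟩

/-- A1-type : general, a ∼ 0, w ≁ 0 → w + a ∼ w -/
theorem add_sim_of_sim_zero {a w : R} (ha0 : D.le a 0) (h0a : D.le 0 a)
    (hw : ¬ (D.le w 0 ∧ D.le 0 w)) : D.le (w + a) w ∧ D.le w (w + a) := by
  constructor
  · have := D.qr4 a 0 w ha0 hw
    simpa [add_comm] using this
  · have hwa : ¬ (D.le w a ∧ D.le a w) := by
      intro hc
      exact hw ⟨D.trans _ _ _ hc.1 ha0, D.trans _ _ _ h0a hc.2⟩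
    have := D.qr4 0 a w h0a hwa
    simpa [add_comm] using this

/-- A2 : support additively closed in case A -/
theorem caseA_support_add (hA : ¬ D.le 0 (-1)) {a b : R} (ha : D.le a 0 ∧ D.le 0 a)
    (hb : D.le b 0 ∧ D.le 0 b) : D.le (a + b) 0 ∧ D.le 0 (a + b) := by
  have h10 : ¬ (D.le 1 0 ∧ D.le 0 1) := fun hc => D.nle10 hc.1
  have h1a : D.le (1 + a) 1 ∧ D.le 1 (1 + a) := D.add_sim_of_sim_zero ha.1 ha.2 h10
  have h1ab0 : ¬ (D.le (1 + a) 0 ∧ D.le 0 (1 + a)) := by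
    intro hc
    exact D.nle10 (D.trans _ _ _ h1a.2 hc.1)
  have h1ab : D.le ((1 + a) + b) (1 + a) ∧ D.le (1 + a) ((1 + a) + b) :=
    D.add_sim_of_sim_zero hb.1 hb.2 h1ab0
  have hs : D.le (1 + a + b) 1 := D.trans _ _ _ h1ab.1 h1a.1
  have hs' : D.le 1 (1 + a + b) := D.trans _ _ _ h1a.2 h1ab.2
  have hn11 : ¬ (D.le (-1) 1 ∧ D.le 1 (-1)) := by
    intro hc
    exact hA (D.trans _ _ _ D.zle1 hc.2)
  constructor
  · have := D.qr4 (1 + a + b) 1 (-1) hs hn11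
    have h2 : (1 + a + b) + (-1) = a + b := by ring
    have h3 : (1 : R) + (-1) = 0 := by ring
    rwa [h2, h3] at this
  · have hn1s : ¬ (D.le (-1) (1 + a + b) ∧ D.le (1 + a + b) (-1)) := by
      intro hc
      exact hA (D.trans _ _ _ (D.trans _ _ _ D.zle1 hs') hc.2)
    have := D.qr4 1 (1 + a + b) (-1) hs' hn1s
    have h2 : (1 + a + b) + (-1) = a + b := by ring
    have h3 : (1 : R) + (-1) = 0 := by ring
    rwa [h2, h3] at this

/-- O4 in case A -/
theorem caseA_O4 (hA : ¬ D.le 0 (-1)) {x y : R} (z : R) (hxy : D.le x y) : D.le (x + z) (y + z) := by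
  by_cases hzy : D.le z y ∧ D.le y z
  · -- z ∼ y
    by_cases hyn : D.le y (-y) ∧ D.le (-y) y
    · -- y ∼ -y hence y ∼ 0, z ∼ 0
      have hy0 : D.le y 0 ∧ D.le 0 y := D.caseA_sim_zero_of_sim_neg hA hyn.1 hyn.2
      have hz0 : D.le z 0 ∧ D.le 0 z :=
        ⟨D.trans _ _ _ hzy.1 hy0.1, D.trans _ _ _ hy0.2 hzy.2⟩
      have hyz0 : D.le (y + z) 0 ∧ D.le 0 (y + z) := D.caseA_support_add hA hy0 hz0
      have hx0 : D.le x 0 := D.trans _ _ _ hxy hy0.1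
      have hxz0 : D.le (x + z) 0 := by
        by_cases hx : D.le x 0 ∧ D.le 0 x
        · exact (D.caseA_support_add hA hx hz0).1
        · have hx' : ¬ (D.le x 0 ∧ D.le 0 x) := hx
          have := D.add_sim_of_sim_zero hz0.1 hz0.2 hx'
          exact D.trans _ _ _ this.1 hx0
      exact D.trans _ _ _ hxz0 hyz0.2
    · -- y ≁ -y : then x - y ⪯ 0
      have hd : D.le (x - y) 0 := by
        have := D.qr4 x y (-y) hxy (fun hc => hyn ⟨hc.2, hc.1⟩)
        simpa [sub_eq_add_neg] using this
      by_cases hd0 : D.le 0 (x - y)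
      · -- x - y ∼ 0
        by_cases hyz : D.le (y + z) 0 ∧ D.le 0 (y + z)
        · have hxz : D.le (x + z) 0 := by
            have h1 := (D.caseA_support_add hA ⟨hd, hd0⟩ hyz).1
            have h2 : (x - y) + (y + z) = x + z := by ring
            rwa [h2] at h1
          exact D.trans _ _ _ hxz hyz.2
        · have := D.add_sim_of_sim_zero hd (hd0) hyz
          have h2 : (y + z) + (x - y) = x + z := by ring
          rw [h2] at this
          exact this.1
      · -- x - y ≺ 0 strictly
        by_cases hyz : D.le (y + z) 0 ∧ D.le 0 (y + z)
        · have := D.add_sim_of_sim_zero hyz.1 hyz.2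
            (fun hc => hd0 hc.2)
          have h2 : (x - y) + (y + z) = x + z := by ring
          rw [h2] at this
          exact D.trans _ _ _ this.1 (D.trans _ _ _ hd hyz.2)
        · have := D.qr4 (x - y) 0 (y + z) hd hyz
          have h2 : (x - y) + (y + z) = x + z := by ring
          have h3 : (0 : R) + (y + z) = y + z := by ring
          rwa [h2, h3] at this
  · exact D.qr4 x y z hxy hzy



section CaseB

/-- B1 : everything is nonnegative in case B. -/
theorem pos (hB : D.le 0 (-1)) (x : R) : D.le 0 x := by
  rcases D.total 0 x with h | h
  · exact h
  · have h1 : D.le 0 (-x) := D.neg_nonneg' h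
    have h2 : D.le (0 * (-1)) ((-x) * (-1)) := D.qr3 0 (-x) (-1) h1 hB
    exact D.le_congr h2 (by ring) (by ring)

theorem le_neg_self (hB : D.le 0 (-1)) (x : R) : D.le x (-x) := by
  have h1 : D.le 1 (-1) := by
    by_contra hc
    have h2 : D.le (-1) 1 := D.le_of_not_le' hc
    have h3 : D.le ((-1) * (-1)) (1 * (-1)) := D.qr3 (-1) 1 (-1) h2 hB
    exact hc (D.le_congr h3 (by ring) (by ring))
  have h2 : D.le (1 * x) ((-1) * x) := D.qr3 1 (-1) x h1 (D.pos hB x)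
  exact D.le_congr h2 (by ring) (by ring)

theorem neg_self_le (hB : D.le 0 (-1)) (x : R) : D.le (-x) x := by
  have := D.le_neg_self hB (-x)
  simpa using this

/-- B5 : the crucial ultrametric-type inequality. -/
theorem b5 (hB : D.le 0 (-1)) {a b : R} (hab : D.le a b) : D.le (a + b) b := by
  by_contra hc
  have h1 : D.le b (a + b) := D.le_of_not_le' hc
  have hna : ¬ D.le (a + b) a := fun hx => hc (D.trans _ _ _ hx hab)
  have h2 : D.le b (-(a + b)) := D.trans _ _ _ h1 (D.le_neg_self hB _)
  have h3 : ¬ (D.le a (-(a+b)) ∧ D.le (-(a+b)) a) := by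
    intro hx
    exact hna (D.trans _ _ _ (D.le_neg_self hB _) hx.2)
  have h4 := D.qr4 b (-(a+b)) a h2 h3
  have h5 : D.le (a + b) (-b) := D.le_congr h4 (by ring) (by ring)
  exact hc (D.trans _ _ _ h5 (D.neg_self_le hB b))

theorem q_mul (hB : D.le 0 (-1)) {x : R} (hx : D.le x 0) (y : R) : D.le (x * y) 0 := by
  have := D.qr3 x 0 y hx (D.pos hB y)
  exact D.le_congr this rfl (by ring)

theorem nq_mul {x y : R} (hx : ¬ D.le x 0) (hy : ¬ D.le y 0) : ¬ D.le (x * y) 0 :=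
  fun hc => (D.qr2 x y hc).elim hx hy

theorem mul_le_mul_right' (hB : D.le 0 (-1)) {x y : R} (z : R) (h : D.le x y) :
    D.le (x * z) (y * z) := D.qr3 x y z h (D.pos hB z)

theorem cancel (hB : D.le 0 (-1)) {x y z : R} (hz : ¬ D.le z 0) (h : D.le (x * z) (y * z)) :
    D.le x y := D.qr5 x y z (D.pos hB z) hz h

/-- q (the support) is closed under addition. -/
theorem q_add (hB : D.le 0 (-1)) {x y : R} (hx : D.le x 0) (hy : D.le y 0) : D.le (x + y) 0 := by
  have h1 : D.le x y := D.trans _ _ _ hx (D.pos hB y)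
  exact D.trans _ _ _ (D.b5 hB h1) hy

end CaseB


theorem le_of_eq' {a b : R} (e : a = b) : D.le a b := e ▸ D.refl a

/-- Pairs of "units" (elements not in the support), representing formal quotients. -/
def BPre {R : Type} [CommRing R] (D : QOAux R) : Type :=
  {p : R × R // ¬ D.le p.1 0 ∧ ¬ D.le p.2 0}

variable {R : Type} [CommRing R]

def bsetoid (D : QOAux R) (hB : D.le 0 (-1)) : Setoid (BPre D) where
  r p q := D.le (p.1.1 * q.1.2) (q.1.1 * p.1.2) ∧ D.le (q.1.1 * p.1.2) (p.1.1 * q.1.2)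
  iseqv := by
    constructor
    · intro p; exact ⟨D.refl _, D.refl _⟩
    · intro p q h; exact ⟨h.2, h.1⟩
    · intro p q r h1 h2
      have key : ∀ a b c d e f : R, ¬ D.le d 0 →
          D.le (a * d) (c * b) → D.le (c * f) (e * d) → D.le (a * f) (e * b) := by
        intro a b c d e f hd k1 k2
        have m1 : D.le ((a * d) * f) ((c * b) * f) := D.mul_le_mul_right' hB f k1
        have m2 : D.le ((c * f) * b) ((e * d) * b) := D.mul_le_mul_right' hB b k2
        have m1' : D.le ((a * f) * d) ((c * f) * b) := D.le_congr m1 (by ring) (by ring)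
        have m2' : D.le ((c * f) * b) ((e * b) * d) := D.le_congr m2 rfl (by ring)
        exact D.cancel hB hd (D.trans _ _ _ m1' m2')
      exact ⟨key p.1.1 p.1.2 q.1.1 q.1.2 r.1.1 r.1.2 q.2.2 h1.1 h2.1,
             key r.1.1 r.1.2 q.1.1 q.1.2 p.1.1 p.1.2 q.2.2 h2.2 h1.2⟩

/-- The value group in the valuational case. -/
@[reducible] def BGamma (D : QOAux R) (hB : D.le 0 (-1)) : Type :=
  Quotient (bsetoid D hB)

namespace BGamma

variable {D : QOAux R} {hB : D.le 0 (-1)}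

theorem sim_mul (hB : D.le 0 (-1)) {a b c d : R}
    (h1 : D.le a b ∧ D.le b a) (h2 : D.le c d ∧ D.le d c) :
    D.le (a * c) (b * d) ∧ D.le (b * d) (a * c) := by
  have step : ∀ x y u w : R, D.le x y → D.le u w →
      D.le (x * u) (y * w) := by
    intro x y u w hxy huw
    have m1 : D.le (x * u) (x * w) := by
      have := D.qr3 u w x huw (D.pos hB x)
      exact D.le_congr this (by ring) (by ring)
    have m2 : D.le (x * w) (y * w) := D.qr3 x y w hxy (D.pos hB w)
    exact D.trans _ _ _ m1 m2
  exact ⟨step a b c d h1.1 h2.1, step b a d c h1.2 h2.2⟩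

protected def add (D : QOAux R) (hB : D.le 0 (-1)) :
    BGamma D hB → BGamma D hB → BGamma D hB :=
  Quotient.map₂ (fun p q => ⟨(p.1.1 * q.1.1, p.1.2 * q.1.2),
      D.nq_mul p.2.1 q.2.1, D.nq_mul p.2.2 q.2.2⟩)
    (by
      rintro p p' hp q q' hq
      have hm := sim_mul hB (And.intro hp.1 hp.2) (And.intro hq.1 hq.2)
      exact ⟨D.le_congr hm.1 (by ring) (by ring), D.le_congr hm.2 (by ring) (by ring)⟩)

protected def neg (D : QOAux R) (hB : D.le 0 (-1)) :
    BGamma D hB → BGamma D hB :=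
  Quotient.map (fun p => ⟨(p.1.2, p.1.1), p.2.2, p.2.1⟩)
    (by
      rintro p q h
      exact ⟨D.le_congr h.2 (by ring) (by ring), D.le_congr h.1 (by ring) (by ring)⟩)

protected def zero (D : QOAux R) (hB : D.le 0 (-1)) : BGamma D hB :=
  Quotient.mk (bsetoid D hB) ⟨(1, 1), D.nle10, D.nle10⟩

instance : Add (BGamma D hB) := ⟨BGamma.add D hB⟩
instance : Zero (BGamma D hB) := ⟨BGamma.zero D hB⟩
instance : Neg (BGamma D hB) := ⟨BGamma.neg D hB⟩

instance : AddCommGroup (BGamma D hB) where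
  add := (· + ·)
  zero := 0
  neg := Neg.neg
  add_assoc a b c := Quotient.inductionOn₃ a b c (fun p q r =>
    Quotient.sound ⟨D.le_of_eq' (by ring), D.le_of_eq' (by ring)⟩)
  zero_add a := Quotient.inductionOn a (fun p =>
    Quotient.sound ⟨D.le_of_eq' (by ring), D.le_of_eq' (by ring)⟩)
  add_zero a := Quotient.inductionOn a (fun p =>
    Quotient.sound ⟨D.le_of_eq' (by ring), D.le_of_eq' (by ring)⟩)
  add_comm a b := Quotient.inductionOn₂ a b (fun p q =>
    Quotient.sound ⟨D.le_of_eq' (by ring), D.le_of_eq' (by ring)⟩)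
  neg_add_cancel a := Quotient.inductionOn a (fun p =>
    Quotient.sound ⟨D.le_of_eq' (by ring), D.le_of_eq' (by ring)⟩)
  nsmul := nsmulRec
  zsmul := zsmulRec

protected def le (D : QOAux R) (hB : D.le 0 (-1)) :
    BGamma D hB → BGamma D hB → Prop :=
  Quotient.lift₂ (fun p q => D.le (q.1.1 * p.1.2) (p.1.1 * q.1.2))
    (by
      have key : ∀ (p q p' q' : BPre D),
          ((bsetoid D hB).r p p') → ((bsetoid D hB).r q q') →
          D.le (q.1.1 * p.1.2) (p.1.1 * q.1.2) →
          D.le (q'.1.1 * p'.1.2) (p'.1.1 * q'.1.2) := by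
        rintro ⟨⟨a, b⟩, hab⟩ ⟨⟨c, d⟩, hcd⟩ ⟨⟨a', b'⟩, hab'⟩ ⟨⟨c', d'⟩, hcd'⟩ hp hq h0
        simp only [bsetoid] at hp hq h0 ⊢
        have k1 : D.le ((c' * d) * (b * b')) ((c * d') * (b * b')) :=
          D.mul_le_mul_right' hB _ hq.2
        have k2 : D.le ((c * b) * (b' * d')) ((a * d) * (b' * d')) :=
          D.mul_le_mul_right' hB _ h0
        have k3 : D.le ((a * b') * (d * d')) ((a' * b) * (d * d')) :=
          D.mul_le_mul_right' hB _ hp.1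
        have c1 := D.trans _ _ _ (D.le_congr k1 rfl (by ring)) k2
        have c2 := D.trans _ _ _ (D.le_congr c1 rfl (by ring)) k3
        have c3 : D.le ((c' * b') * (b * d)) ((a' * d') * (b * d)) :=
          D.le_congr c2 (by ring) (by ring)
        exact D.cancel hB (D.nq_mul hab.2 hcd.2) c3
      intro p q p' q' hp hq
      exact propext ⟨key p q p' q' hp hq,
        key p' q' p q ((bsetoid D hB).iseqv.symm hp) ((bsetoid D hB).iseqv.symm hq)⟩)

instance : LE (BGamma D hB) := ⟨BGamma.le D hB⟩

noncomputable instance : LinearOrder (BGamma D hB) where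
  le := (· ≤ ·)
  le_refl a := Quotient.inductionOn a (fun p => D.refl _)
  le_trans a b c := Quotient.inductionOn₃ a b c (fun p q r h1 h2 => by
    have k1 : D.le ((r.1.1 * q.1.2) * p.1.2) ((q.1.1 * r.1.2) * p.1.2) :=
      D.mul_le_mul_right' hB _ h2
    have k2 : D.le ((q.1.1 * p.1.2) * r.1.2) ((p.1.1 * q.1.2) * r.1.2) :=
      D.mul_le_mul_right' hB _ h1
    have c1 := D.trans _ _ _ (D.le_congr k1 rfl (by ring)) k2
    have c2 : D.le ((r.1.1 * p.1.2) * q.1.2) ((p.1.1 * r.1.2) * q.1.2) :=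
      D.le_congr c1 (by ring) (by ring)
    exact D.cancel hB q.2.2 c2)
  le_antisymm a b := Quotient.inductionOn₂ a b (fun p q h1 h2 =>
    Quotient.sound ⟨h2, h1⟩)
  le_total a b := Quotient.inductionOn₂ a b (fun p q => D.total _ _)
  toDecidableLE := fun _ _ => Classical.propDecidable _

noncomputable instance : IsOrderedAddMonoid (BGamma D hB) :=
  { add_le_add_left := by
      intro a b hab c
      refine Quotient.inductionOn₃ a b c (fun p q r hab => ?_) hab
      have k := D.mul_le_mul_right' hB (r.1.1 * r.1.2) hab
      exact D.le_congr k (by ring) (by ring) }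

theorem mk_le_mk {p q : BPre D} :
    (Quotient.mk (bsetoid D hB) p ≤ Quotient.mk (bsetoid D hB) q) =
      D.le (q.1.1 * p.1.2) (p.1.1 * q.1.2) := rfl

end BGamma

open Classical in
noncomputable def bval (D : QOAux R) (hB : D.le 0 (-1)) (x : R) :
    WithTop (BGamma D hB) :=
  if h : D.le x 0 then ⊤
  else ((Quotient.mk (bsetoid D hB) ⟨(x, 1), h, D.nle10⟩ : BGamma D hB) : WithTop (BGamma D hB))

namespace bval

variable (D : QOAux R) (hB : D.le 0 (-1))

theorem top_iff (x : R) : bval D hB x = ⊤ ↔ D.le x 0 := by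
  unfold bval
  by_cases h : D.le x 0
  · simp [h]
  · simp [h]

theorem le_iff (x y : R) : D.le x y ↔ bval D hB y ≤ bval D hB x := by
  unfold bval
  by_cases hy : D.le y 0
  · rw [dif_pos hy]
    simp only [top_le_iff]
    constructor
    · intro h
      rw [dif_pos (D.trans _ _ _ h hy)]
    · intro h
      by_cases hx : D.le x 0
      · exact D.trans _ _ _ hx (D.pos hB y)
      · rw [dif_neg hx] at h
        exact absurd h (WithTop.coe_ne_top)
  · rw [dif_neg hy]
    by_cases hx : D.le x 0
    · rw [dif_pos hx]
      simp only [le_top, iff_true]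
      exact D.trans _ _ _ hx (D.pos hB y)
    · rw [dif_neg hx, WithTop.coe_le_coe]
      show D.le x y ↔ D.le (x * 1) (y * 1)
      constructor
      · intro h; exact D.le_congr h (by ring) (by ring)
      · intro h; exact D.le_congr h (by ring) (by ring)

theorem map_zero' : bval D hB 0 = ⊤ := by
  rw [top_iff]; exact D.refl 0

theorem map_one' : bval D hB 1 = 0 := by
  unfold bval
  rw [dif_neg D.nle10]
  rfl

theorem map_mul' (x y : R) : bval D hB (x * y) = bval D hB x + bval D hB y := by
  by_cases hx : D.le x 0
  · have hxy : D.le (x * y) 0 := D.q_mul hB hx y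
    unfold bval
    rw [dif_pos hx, dif_pos hxy]
    exact (top_add _).symm
  · by_cases hy : D.le y 0
    · have hxy : D.le (x * y) 0 := by
        have := D.q_mul hB hy x
        exact D.le_congr this (by ring) rfl
      unfold bval
      rw [dif_pos hy, dif_pos hxy]
      exact (add_top _).symm
    · have hxy : ¬ D.le (x * y) 0 := D.nq_mul hx hy
      unfold bval
      rw [dif_neg hx, dif_neg hy, dif_neg hxy, ← WithTop.coe_add]
      apply congrArg
      exact Quotient.sound ⟨D.le_of_eq' (by ring), D.le_of_eq' (by ring)⟩

theorem map_add' (x y : R) :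
    min (bval D hB x) (bval D hB y) ≤ bval D hB (x + y) := by
  -- wlog via totality
  have key : ∀ a b : R, D.le a b →
      min (bval D hB a) (bval D hB b) ≤ bval D hB (a + b) := by
    intro a b hab
    by_cases hs : D.le (a + b) 0
    · rw [(top_iff D hB (a + b)).mpr hs]
      exact le_top
    · have hb : ¬ D.le b 0 := by
        intro hb
        exact hs (D.q_add hB (D.trans _ _ _ hab hb) hb)
      refine le_trans (min_le_right _ _) ?_
      rw [← le_iff D hB]
      exact D.b5 hB hab
  rcases D.total x y with h | h
  · exact key x y h
  · have := key y x h
    rw [min_comm] at this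
    have e : y + x = x + y := by ring
    rwa [e] at this

end bval

section ValBack

variable {R : Type} [CommRing R] (V : RingValuation R)

theorem RV.v_zero_ne_top' : (0 : WithTop V.Γ) ≠ ⊤ := by
  rw [← WithTop.coe_zero]
  exact WithTop.coe_ne_top

theorem RV.v_neg_one : V.v (-1) = 0 := by
  have h := V.map_mul (-1) (-1)
  rw [show ((-1 : R) * (-1)) = 1 by ring, V.map_one] at h
  have hne : V.v (-1) ≠ ⊤ := by
    intro hc
    rw [hc, top_add] at h
    exact RV.v_zero_ne_top' V h
  lift V.v (-1) to V.Γ using hne with g hg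
  rw [← WithTop.coe_add, ← WithTop.coe_zero, WithTop.coe_eq_coe] at h
  have hg0 : g = 0 := by
    rcases lt_trichotomy g 0 with hlt | he | hgt
    · have h2 := add_lt_add hlt hlt
      rw [← h, add_zero] at h2
      exact absurd h2 (lt_irrefl _)
    · exact he
    · have h2 := add_lt_add hgt hgt
      rw [← h, add_zero] at h2
      exact absurd h2 (lt_irrefl _)
  rw [hg0, WithTop.coe_zero]

theorem RV.v_neg (x : R) : V.v (-x) = V.v x := by
  have h := V.map_mul (-1) x
  rw [show ((-1 : R) * x) = -x by ring, RV.v_neg_one V, zero_add] at h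
  exact h

theorem RV.v_add_eq_left {x y : R} (h : V.v x < V.v y) : V.v (x + y) = V.v x := by
  have h1 : V.v x ≤ V.v (x + y) := by
    have := V.map_add x y
    rwa [min_eq_left h.le] at this
  have h2 : min (V.v (x + y)) (V.v y) ≤ V.v x := by
    have := V.map_add (x + y) (-y)
    rw [show x + y + -y = x by ring, RV.v_neg V] at this
    exact this
  rcases min_le_iff.mp h2 with h3 | h3
  · exact le_antisymm h3 h1
  · exact absurd (lt_of_lt_of_le h h3) (lt_irrefl _)

theorem RV.v_zero_ne_top : (0 : WithTop V.Γ) ≠ ⊤ := by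
  rw [show (0 : WithTop V.Γ) = ((0 : V.Γ) : WithTop V.Γ) from rfl]
  exact WithTop.coe_ne_top

/-- A valuation-induced relation satisfies the quasi-ordering axioms. -/
theorem RV.qr4 {x y z : R} (hxy : V.v y ≤ V.v x) (hzy : V.v z ≠ V.v y) :
    V.v (y + z) ≤ V.v (x + z) := by
  rcases lt_or_gt_of_ne hzy with hlt | hgt
  · -- v z < v y : v (y+z) = v z
    have e : V.v (y + z) = V.v z := by
      rw [show y + z = z + y by ring]
      exact RV.v_add_eq_left V hlt
    rw [e]
    refine le_trans (le_min ?_ (le_refl _)) (V.map_add x z)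
    exact le_trans hlt.le hxy
  · -- v y < v z : v (y+z) = v y
    have e : V.v (y + z) = V.v y := RV.v_add_eq_left V hgt
    rw [e]
    refine le_trans (le_min hxy ?_) (V.map_add x z)
    exact hgt.le

end ValBack

end QOAux

open QOAux

theorem lecongr' {R : Type} [CommRing R] {le : R → R → Prop} {a b a' b' : R}
    (h : le a b) (e1 : a = a') (e2 : b = b') : le a' b' := e1 ▸ e2 ▸ h

/-- Characterization: `(R, ⪯)` is a quasi-ordered ring if and only if it is either an
ordered ring or else `⪯` is induced by a valuation on `R`; moreover the supports
coincide. -/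
theorem quasiOrderedRing_characterization
    {R : Type} [CommRing R] (le : R → R → Prop) :
    -- `(R, ⪯)` is a quasi-ordered ring ...
    ((∀ x : R, le x x) ∧
     (∀ x y z : R, le x y → le y z → le x z) ∧
     (∀ x y : R, le x y ∨ le y x) ∧
     (le 0 1 ∧ ¬ le 1 0) ∧
     (∀ x y : R, le (x * y) 0 → le x 0 ∨ le y 0) ∧
     (∀ x y z : R, le x y → le 0 z → le (x * z) (y * z)) ∧
     (∀ x y z : R, le x y → ¬ (le z y ∧ le y z) → le (x + z) (y + z)) ∧
     (∀ x y z : R, le 0 z → ¬ le z 0 → le (x * z) (y * z) → le x y))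
    ↔
    -- ... iff it is an ordered ring ...
    (((∀ x : R, le x x) ∧
      (∀ x y z : R, le x y → le y z → le x z) ∧
      (∀ x y : R, le x y ∨ le y x) ∧
      (le 0 1 ∧ ¬ le 1 0) ∧
      (∀ x y : R, le (x * y) 0 → le x 0 ∨ le y 0) ∧
      (∀ x y z : R, le x y → le 0 z → le (x * z) (y * z)) ∧
      (∀ x y z : R, le x y → le (x + z) (y + z)))
     ∨
     -- ... or `⪯` is induced by a valuation on `R` (supports coinciding)
     (∃ V : RingValuation R,
       (∀ x y : R, le x y ↔ V.v y ≤ V.v x) ∧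
       (∀ x : R, V.v x = ⊤ ↔ (le x 0 ∧ le 0 x)))) := by
  constructor
  · rintro ⟨h1, h2, h3, ⟨h4a, h4b⟩, h5, h6, h7, h8⟩
    let D : QOAux R := ⟨le, h1, h2, h3, h4a, h4b, h5, h6, h7, h8⟩
    by_cases hB : le 0 (-1)
    · -- valuational case
      right
      refine ⟨{ Γ := BGamma D hB, v := bval D hB,
                map_zero := bval.map_zero' D hB,
                map_one := bval.map_one' D hB,
                map_mul := bval.map_mul' D hB,
                map_add := bval.map_add' D hB }, ?_, ?_⟩
      · intro x y
        exact bval.le_iff D hB x y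
      · intro x
        constructor
        · intro h
          exact ⟨(bval.top_iff D hB x).mp h, D.pos hB x⟩
        · intro h
          exact (bval.top_iff D hB x).mpr h.1
    · -- ordered case
      left
      exact ⟨h1, h2, h3, ⟨h4a, h4b⟩, h5, h6,
        fun x y z hxy => D.caseA_O4 hB z hxy⟩
  · rintro (⟨h1, h2, h3, h4, h5, h6, h7⟩ | ⟨V, hiff, _⟩)
    · -- ordered ring is quasi-ordered
      refine ⟨h1, h2, h3, h4, h5, h6, fun x y z hxy _ => h7 x y z hxy,
        ?_⟩
      intro x y z hz0 hz1 hxz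
      by_contra hc
      have hd0 : ¬ le (x - y) 0 := by
        intro hcc
        exact hc (lecongr' (h7 (x - y) 0 y hcc) (by ring) (by ring))
      have k1 : le ((x - y) * z) 0 :=
        lecongr' (h7 (x * z) (y * z) (-(y * z)) hxz) (by ring) (by ring)
      rcases h5 (x - y) z k1 with h | h
      · exact hd0 h
      · exact hz1 h
    · -- valuation-induced relation is quasi-ordered
      have hzt : (0 : WithTop V.Γ) ≠ ⊤ := RV.v_zero_ne_top' V
      refine ⟨?_, ?_, ?_, ⟨?_, ?_⟩, ?_, ?_, ?_, ?_⟩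
      · intro x; exact (hiff x x).mpr (le_refl _)
      · intro x y z hxy hyz
        exact (hiff x z).mpr (le_trans ((hiff y z).mp hyz) ((hiff x y).mp hxy))
      · intro x y
        rcases le_total (V.v y) (V.v x) with h | h
        · exact Or.inl ((hiff x y).mpr h)
        · exact Or.inr ((hiff y x).mpr h)
      · apply (hiff 0 1).mpr
        rw [V.map_zero]
        exact le_top
      · intro hc
        have := (hiff 1 0).mp hc
        rw [V.map_zero, V.map_one] at this
        exact hzt (top_le_iff.mp this)
      · intro x y h
        have := (hiff (x * y) 0).mp h
        rw [V.map_zero] at this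
        have ht : V.v (x * y) = ⊤ := top_le_iff.mp this
        rw [V.map_mul] at ht
        rcases WithTop.add_eq_top.mp ht with h' | h'
        · left
          apply (hiff x 0).mpr
          rw [V.map_zero, h']
        · right
          apply (hiff y 0).mpr
          rw [V.map_zero, h']
      · intro x y z hxy _
        apply (hiff (x * z) (y * z)).mpr
        rw [V.map_mul, V.map_mul]
        exact add_le_add_left ((hiff x y).mp hxy) _
      · intro x y z hxy hzy
        apply (hiff (x + z) (y + z)).mpr
        apply RV.qr4 V ((hiff x y).mp hxy)
        intro he
        exact hzy ⟨(hiff z y).mpr he.ge, (hiff y z).mpr he.le⟩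
      · intro x y z _ hz0 h
        apply (hiff x y).mpr
        have hvzt : V.v z ≠ ⊤ := by
          intro hc
          apply hz0
          apply (hiff z 0).mpr
          rw [V.map_zero, hc]
        have := (hiff (x * z) (y * z)).mp h
        rw [V.map_mul, V.map_mul] at this
        exact (WithTop.add_le_add_iff_right hvzt).mp this
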